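/- Any 3-hitting family of permutations for the antichain on n elements has size at least log_2(n − 1). -/

import Mathlib

/-- A schedule for a partial order is a linear extension: a linear order
relation `r` that extends the partial order. -/
def IsSchedule {α : Type*} [PartialOrder α] (r : α → α → Prop) : Prop :=
  IsLinearOrder α r ∧ ∀ x y : α, x ≤ y → r x y

/-- A schedule `r` hits the tuple `a` if it orders `a 0, a 1, ...` in this order. -/
def Hits {α : Type*} (r : α → α → Prop) {d : ℕ} (a : Fin d → α) : Prop :=
  ∀ i j : Fin d, i < j → r (a i) (a j)

/-- A `d`-tuple of distinct events is admissible if no later component is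
strictly below an earlier one. -/
def Admissible {α : Type*} [PartialOrder α] {d : ℕ} (a : Fin d → α) : Prop :=
  Function.Injective a ∧ ∀ i j : Fin d, i < j → ¬ (a j < a i)

/-- A family of schedules (indexed by `Fin k`) is `d`-hitting if every member is a
schedule and every admissible `d`-tuple is hit by some member. -/
def IsHittingFamily {α : Type*} [PartialOrder α] {k : ℕ} (F : Fin k → (α → α → Prop)) (d : ℕ) : Prop :=
  (∀ i, IsSchedule (F i)) ∧ ∀ a : Fin d → α, Admissible a → ∃ i, Hits (F i) a

/-- The antichain on `n` elements: `n` pairwise incomparable events. -/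
def Antichain (n : ℕ) := Fin n

/-- The discrete partial order on the antichain: distinct elements are incomparable. -/
instance Antichain.instPartialOrder {n : ℕ} : PartialOrder (Antichain n) where
  le x y := x = y
  le_refl _ := rfl
  le_trans _ _ _ h1 h2 := Eq.trans h1 h2
  le_antisymm _ _ h _ := h

lemma antichain_not_lt {n : ℕ} (x y : Antichain n) : ¬ x < y := by
  intro h
  exact h.2 (h.1.symm)

lemma antichain_card_bound (n k : ℕ)
    (F : Fin k → (Antichain n → Antichain n → Prop)) (hF : IsHittingFamily F 3)
    (hn : 2 ≤ n) : n - 1 ≤ 2 ^ k := by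
  classical
  obtain ⟨hsched, hhit⟩ := hF
  set last : Antichain n := (⟨n - 1, by omega⟩ : Fin n) with hlast
  have key : ∀ j j' : Fin (n-1), j ≠ j' →
      ∃ i, F i (⟨j, by omega⟩ : Fin n) last ∧ ¬ F i (⟨j', by omega⟩ : Fin n) last := by
    intro j j' hne
    have hj : (⟨j, by omega⟩ : Fin n) ≠ last := by
      rw [hlast]; simp only [ne_eq, Fin.mk.injEq]; omega
    have hj' : (⟨j', by omega⟩ : Fin n) ≠ last := by
      rw [hlast]; simp only [ne_eq, Fin.mk.injEq]; omega
    have hjj' : (⟨j, by omega⟩ : Fin n) ≠ (⟨j', by omega⟩ : Fin n) := by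
      simp only [ne_eq, Fin.mk.injEq]
      intro h
      exact hne (Fin.ext h)
    set a : Fin 3 → Antichain n := ![⟨j, by omega⟩, last, ⟨j', by omega⟩] with ha
    have hne' : (j : ℕ) ≠ (j' : ℕ) := fun h => hne (Fin.ext h)
    have hadm : Admissible a := by
      constructor
      · intro x y hxy
        fin_cases x <;> fin_cases y <;>
          first
          | rfl
          | exact absurd hxy hj | exact absurd hxy.symm hj
          | exact absurd hxy hj' | exact absurd hxy.symm hj'
          | exact absurd hxy hjj' | exact absurd hxy.symm hjj'
      · intro i j hij
        exact antichain_not_lt _ _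
    obtain ⟨i, hi⟩ := hhit a hadm
    refine ⟨i, hi 0 1 (by decide), ?_⟩
    have h2 : F i last (⟨j', by omega⟩ : Fin n) := hi 1 2 (by decide)
    intro hcontra
    exact hj' ((hsched i).1.toIsPartialOrder.toAntisymm.antisymm _ _ hcontra h2)
  let c : Fin (n-1) → (Fin k → Prop) := fun j i => F i (⟨j, by omega⟩ : Fin n) last
  have hinj : Function.Injective c := by
    intro j j' h
    by_contra hne
    obtain ⟨i, h1, h2⟩ := key j j' hne
    have := congrFun h i
    simp only [c] at this
    rw [this] at h1
    exact h2 h1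
  have := Fintype.card_le_of_injective c hinj
  simpa using this

/-- any `3`-hitting family of schedules for the antichain on `n`
elements has size at least `log₂ (n − 1)`. -/
theorem antichain_three_hitting_lower_bound (n k : ℕ)
    (F : Fin k → (Antichain n → Antichain n → Prop)) (hF : IsHittingFamily F 3) :
    Real.logb 2 ((n : ℝ) - 1) ≤ k := by
  rcases le_or_gt n 1 with hn | hn
  · interval_cases n <;> norm_num [Real.logb]
  · have hcard := antichain_card_bound n k F hF (by omega)
    have h1 : (n : ℝ) - 1 ≤ (2 : ℝ) ^ k := by
      have h2 : ((n - 1 : ℕ) : ℝ) ≤ ((2 ^ k : ℕ) : ℝ) := by exact_mod_cast hcard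
      rw [Nat.cast_sub (by omega), Nat.cast_pow] at h2
      exact_mod_cast h2
    calc Real.logb 2 ((n : ℝ) - 1) ≤ Real.logb 2 ((2:ℝ) ^ k) :=
          Real.logb_le_logb_of_le (by norm_num) (by
            have h2 : (2:ℝ) ≤ (n:ℝ) := by exact_mod_cast hn
            linarith) h1
      _ = k := by
          rw [Real.logb_pow, Real.logb_self_eq_one (by norm_num)]
          ring
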